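/- Let e ⊆ V be a hyperedge with |e| ≥ 2 and F_e : 2^V → ℝ_+ the hypergraph cut function F_e(S) = 1 if ∅ ≠ S ∩ e ≠ e, else 0. Then the extreme points of the base polytope B(F_e) are exactly the vectors e_u − e_v for distinct u, v ∈ e, together with 0 when relevant; in particular every extreme point of B(F_e) is of the form e_u − e_v with u, v ∈ e (allowing u = v to give 0). -/

import Mathlib

open scoped BigOperators
open Finset

def cutD {V : Type*} [DecidableEq V] (e : Finset V) : Set (V → ℝ) :=
  {w : V → ℝ | ∃ u ∈ e, ∃ v ∈ e, w = Pi.single u (1 : ℝ) - Pi.single v 1}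

lemma decomp_aux {V : Type*} [Fintype V] [DecidableEq V] (e : Finset V) (hene : e.Nonempty) :
    ∀ n : ℕ, ∀ w : V → ℝ, (Finset.univ.filter (fun x => w x ≠ 0)).card ≤ n →
      (∀ x, x ∉ e → w x = 0) → (∑ x, w x = 0) → (∑ x ∈ e, max (w x) 0 ≤ 1) →
      w ∈ convexHull ℝ (cutD e) := by
  intro n
  induction n with
  | zero =>
    intro w hcard _ _ _
    have hw : ∀ x, w x = 0 := by
      intro x
      by_contra hx
      have hmem : x ∈ Finset.univ.filter (fun x => w x ≠ 0) :=
        Finset.mem_filter.2 ⟨Finset.mem_univ x, hx⟩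
      have := Finset.card_pos.2 ⟨x, hmem⟩
      omega
    apply subset_convexHull
    exact ⟨hene.choose, hene.choose_spec, hene.choose, hene.choose_spec,
      by funext x; simp [hw x]⟩
  | succ n ih =>
    intro w hcard hsupp hsum hpos
    by_cases hw0 : w = 0
    · apply subset_convexHull
      exact ⟨hene.choose, hene.choose_spec, hene.choose, hene.choose_spec,
        by funext x; simp [hw0]⟩
    -- find positive and negative coordinates
    have hp : ∃ p, 0 < w p := by
      by_contra h
      push_neg at h
      apply hw0
      funext x
      have := (Finset.sum_eq_zero_iff_of_nonpos (fun i _ => h i)).1 hsum x (Finset.mem_univ x)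
      exact this
    have hq : ∃ q, w q < 0 := by
      by_contra h
      push_neg at h
      apply hw0
      funext x
      exact (Finset.sum_eq_zero_iff_of_nonneg (fun i _ => h i)).1 hsum x (Finset.mem_univ x)
    obtain ⟨p, hp⟩ := hp
    obtain ⟨q, hq⟩ := hq
    have hpe : p ∈ e := by by_contra h; have := hsupp p h; linarith
    have hqe : q ∈ e := by by_contra h; have := hsupp q h; linarith
    have hpq : p ≠ q := fun h => by rw [h] at hp; linarith
    set m : ℝ := min (w p) (-w q) with hm_def
    have hm : 0 < m := lt_min hp (by linarith)
    have hmwp : m ≤ w p := min_le_left _ _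
    have hmwq : m ≤ -w q := min_le_right _ _
    have hwp_le : w p ≤ ∑ x ∈ e, max (w x) 0 := by
      calc w p ≤ max (w p) 0 := le_max_left _ _
        _ ≤ ∑ x ∈ e, max (w x) 0 :=
          Finset.single_le_sum (f := fun x => max (w x) 0)
            (fun i _ => le_max_right _ _) hpe
    have hm1 : m ≤ 1 := le_trans hmwp (le_trans hwp_le hpos)
    rcases eq_or_lt_of_le hm1 with hm1 | hm1
    · -- m = 1 : w is exactly single p 1 - single q 1
      have hwp1 : (1:ℝ) ≤ w p := hm1 ▸ hmwp
      have hwq1 : (1:ℝ) ≤ -w q := hm1 ▸ hmwq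
      have hsum_e : ∑ x ∈ e, w x = 0 := by
        rw [← hsum]
        exact Finset.sum_subset (Finset.subset_univ e) (fun x _ hx => hsupp x hx)
      have hposeq : ∑ x ∈ e, max (w x) 0 = 1 :=
        le_antisymm hpos (le_trans hwp1 hwp_le)
      have hnegeq : ∑ x ∈ e, max (-w x) 0 = 1 := by
        have : ∀ x ∈ e, max (-w x) 0 = max (w x) 0 - w x := by
          intro x _
          rcases le_or_gt (w x) 0 with h | h
          · rw [max_eq_left (by linarith), max_eq_right h]; ring
          · rw [max_eq_right (by linarith), max_eq_left h.le]; ring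
        rw [Finset.sum_congr rfl this, Finset.sum_sub_distrib, hsum_e, hposeq]
        ring
      have hrest_pos : ∀ x ∈ e, x ≠ p → w x ≤ 0 := by
        intro x hx hxp
        have h1 : ∑ y ∈ e.erase p, max (w y) 0 = 1 - max (w p) 0 := by
          rw [← hposeq, Finset.sum_erase_eq_sub hpe]
        have hwp_le1 : max (w p) 0 ≤ 1 := by
          have : (0:ℝ) ≤ ∑ y ∈ e.erase p, max (w y) 0 :=
            Finset.sum_nonneg (fun i _ => le_max_right _ _)
          linarith
        have hwpeq : max (w p) 0 = 1 := le_antisymm hwp_le1 (by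
          rw [max_eq_left hp.le]; exact hwp1)
        have : ∑ y ∈ e.erase p, max (w y) 0 = 0 := by rw [h1, hwpeq]; ring
        have h0 := (Finset.sum_eq_zero_iff_of_nonneg
          (fun i _ => le_max_right _ _)).1 this x (Finset.mem_erase.2 ⟨hxp, hx⟩)
        by_contra h
        push_neg at h
        rw [max_eq_left h.le] at h0
        linarith
      have hrest_neg : ∀ x ∈ e, x ≠ q → 0 ≤ w x := by
        intro x hx hxq
        have h1 : ∑ y ∈ e.erase q, max (-w y) 0 = 1 - max (-w q) 0 := by
          rw [← hnegeq, Finset.sum_erase_eq_sub hqe]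
        have hwq_le1 : max (-w q) 0 ≤ 1 := by
          have : (0:ℝ) ≤ ∑ y ∈ e.erase q, max (-w y) 0 :=
            Finset.sum_nonneg (fun i _ => le_max_right _ _)
          linarith
        have hwqeq : max (-w q) 0 = 1 := le_antisymm hwq_le1 (by
          rw [max_eq_left (by linarith)]; exact hwq1)
        have : ∑ y ∈ e.erase q, max (-w y) 0 = 0 := by rw [h1, hwqeq]; ring
        have := (Finset.sum_eq_zero_iff_of_nonneg
          (fun i _ => le_max_right _ _)).1 this x (Finset.mem_erase.2 ⟨hxq, hx⟩)
        have : -w x ≤ 0 := by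
          rcases le_or_gt (-w x) 0 with h | h
          · exact h
          · rw [max_eq_left h.le] at this; linarith
        linarith
      have hwp_eq : w p = 1 := by
        have : w p ≤ 1 := le_trans hwp_le (le_of_eq hposeq)
        linarith
      have hwq_eq : w q = -1 := by
        have hq_le : -w q ≤ ∑ x ∈ e, max (-w x) 0 := by
          calc -w q ≤ max (-w q) 0 := le_max_left _ _
            _ ≤ _ := Finset.single_le_sum (f := fun x => max (-w x) 0)
              (fun i _ => le_max_right _ _) hqe
        have : -w q ≤ 1 := le_trans hq_le (le_of_eq hnegeq)
        linarith
      apply subset_convexHull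
      refine ⟨p, hpe, q, hqe, ?_⟩
      funext x
      by_cases hxp : x = p
      · subst hxp
        simp [Pi.single_apply, hpq, hwp_eq]
      by_cases hxq : x = q
      · subst hxq
        simp [Pi.single_apply, Ne.symm hpq, hwq_eq]
      · by_cases hxe : x ∈ e
        · have h1 := hrest_pos x hxe hxp
          have h2 := hrest_neg x hxe hxq
          have : w x = 0 := le_antisymm h1 h2
          simp [Pi.single_apply, hxp, hxq, this]
        · simp [Pi.single_apply, hxp, hxq, hsupp x hxe]
    · -- m < 1 : peel off m • (single p 1 - single q 1)
      set d : V → ℝ := Pi.single p 1 - Pi.single q 1 with hd_def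
      set w' : V → ℝ := w - m • d with hw'_def
      have h1m : (0:ℝ) < 1 - m := by linarith
      set w'' : V → ℝ := (1 - m)⁻¹ • w' with hw''_def
      have hw''x : ∀ x, w'' x = (1 - m)⁻¹ * w' x := fun x => by rw [hw''_def]; rfl
      have hw'ptx : ∀ x, w' x = w x - m * d x := fun x => by rw [hw'_def]; rfl
      clear_value d w' w''
      have hdp : d p = 1 := by simp [hd_def, Pi.single_apply, hpq]
      have hdq : d q = -1 := by simp [hd_def, Pi.single_apply, Ne.symm hpq]
      have hdx : ∀ x, x ≠ p → x ≠ q → d x = 0 := by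
        intro x h1 h2; simp [hd_def, Pi.single_apply, h1, h2]
      have hw'p : w' p = w p - m := by simp [hw'_def, hdp]
      have hw'q : w' q = w q + m := by simp [hw'_def, hdq]
      have hw'x : ∀ x, x ≠ p → x ≠ q → w' x = w x := by
        intro x h1 h2; simp [hw'_def, hdx x h1 h2]
      -- support decreases
      have hcard' : (Finset.univ.filter (fun x => w' x ≠ 0)).card ≤ n := by
        have hsub : ∀ r : V, (r = p ∨ r = q) → w' r = 0 →
            Finset.univ.filter (fun x => w' x ≠ 0) ⊆
              (Finset.univ.filter (fun x => w x ≠ 0)).erase r := by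
          intro r hr hr0
          intro x hx
          rw [Finset.mem_filter] at hx
          refine Finset.mem_erase.2 ⟨?_, Finset.mem_filter.2 ⟨Finset.mem_univ _, ?_⟩⟩
          · rintro rfl; exact hx.2 hr0
          · by_cases h1 : x = p
            · subst h1; exact ne_of_gt hp
            by_cases h2 : x = q
            · subst h2; exact ne_of_lt hq
            · rw [← hw'x x h1 h2]; exact hx.2
        have hpmem : p ∈ Finset.univ.filter (fun x => w x ≠ 0) := by
          simp [ne_of_gt hp]
        rcases min_cases (w p) (-w q) with ⟨h1, _⟩ | ⟨h1, _⟩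
        · have hr0 : w' p = 0 := by rw [hw'p, hm_def, h1]; ring
          have := Finset.card_le_card (hsub p (Or.inl rfl) hr0)
          have h2 := Finset.card_erase_of_mem hpmem
          have h3 := Finset.card_pos.2 ⟨p, hpmem⟩
          omega
        · have hr0 : w' q = 0 := by rw [hw'q, hm_def, h1]; ring
          have hqmem : q ∈ Finset.univ.filter (fun x => w x ≠ 0) := by
            simp [ne_of_lt hq]
          have := Finset.card_le_card (hsub q (Or.inr rfl) hr0)
          have h2 := Finset.card_erase_of_mem hqmem
          have h3 := Finset.card_pos.2 ⟨q, hqmem⟩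
          omega
      have hsupp' : ∀ x, x ∉ e → w' x = 0 := by
        intro x hx
        have h1 : x ≠ p := fun h => hx (h ▸ hpe)
        have h2 : x ≠ q := fun h => hx (h ▸ hqe)
        rw [hw'x x h1 h2]; exact hsupp x hx
      have hsum' : ∑ x, w' x = 0 := by
        have : ∑ x, d x = 0 := by
          simp [hd_def, Finset.sum_sub_distrib, Finset.sum_pi_single']
        simp only [hw'_def, Pi.sub_apply, Pi.smul_apply, smul_eq_mul,
          Finset.sum_sub_distrib, ← Finset.mul_sum, this, hsum]
        ring
      have hpos' : ∑ x ∈ e, max (w' x) 0 ≤ 1 - m := by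
        have key : ∀ x ∈ e, max (w' x) 0 = max (w x) 0 - (if x = p then m else 0) := by
          intro x _
          by_cases h1 : x = p
          · subst h1
            rw [hw'p, if_pos rfl, max_eq_left (by linarith), max_eq_left hp.le]
          by_cases h2 : x = q
          · subst h2
            rw [hw'q, if_neg h1, max_eq_right (by linarith), max_eq_right hq.le]
            ring
          · rw [hw'x x h1 h2, if_neg h1]; ring
        rw [Finset.sum_congr rfl key, Finset.sum_sub_distrib,
          Finset.sum_ite_eq' e p (fun _ => m), if_pos hpe]
        linarith
      -- scale
      have hmem'' : w'' ∈ convexHull ℝ (cutD e) := by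
        apply ih
        · refine le_trans (Finset.card_le_card ?_) hcard'
          intro x hx
          rw [Finset.mem_filter] at hx ⊢
          refine ⟨Finset.mem_univ _, fun h0 => hx.2 ?_⟩
          simp [hw''_def, h0]
        · intro x hx; simp [hw''_def, hsupp' x hx]
        · simp only [hw''_def, Pi.smul_apply, smul_eq_mul, ← Finset.mul_sum, hsum', mul_zero]
        · have : ∀ x ∈ e, max (w'' x) 0 = (1-m)⁻¹ * max (w' x) 0 := by
            intro x _
            rw [hw''_def]
            simp only [Pi.smul_apply, smul_eq_mul]
            rw [mul_max_of_nonneg _ _ (le_of_lt (inv_pos.2 h1m)), mul_zero]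
          rw [Finset.sum_congr rfl this, ← Finset.mul_sum]
          calc (1-m)⁻¹ * ∑ x ∈ e, max (w' x) 0 ≤ (1-m)⁻¹ * (1 - m) := by
                apply mul_le_mul_of_nonneg_left hpos' (le_of_lt (inv_pos.2 h1m))
            _ = 1 := inv_mul_cancel₀ (ne_of_gt h1m)
      have hdmem : d ∈ convexHull ℝ (cutD e) :=
        subset_convexHull ℝ _ ⟨p, hpe, q, hqe, hd_def⟩
      have := (convex_convexHull ℝ (cutD e)) hdmem hmem''
          (le_of_lt hm) (le_of_lt h1m) (by ring)
      have heq : w = m • d + (1 - m) • w'' := by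
        rw [hw''_def, smul_smul, mul_inv_cancel₀ (ne_of_gt h1m), one_smul, hw'_def]
        abel
      rw [heq]
      exact this

lemma single_sum {V : Type*} [DecidableEq V] (u : V) (S : Finset V) :
    ∑ x ∈ S, Pi.single u (1:ℝ) x = if u ∈ S then 1 else 0 := by
  simp [Pi.single_apply]

theorem extremePoints_hypergraph_cut {V : Type*} [Fintype V] [DecidableEq V]
    (e : Finset V) (he : 2 ≤ e.card)
    (F : Finset V → ℝ)
    (hF : ∀ S : Finset V, F S = if (S ∩ e).Nonempty ∧ S ∩ e ≠ e then 1 else 0) :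
    let B : Set (V → ℝ) :=
      {w | (∀ S : Finset V, ∑ x ∈ S, w x ≤ F S) ∧ ∑ x, w x = F Finset.univ}
    (Set.extremePoints ℝ B ⊆
      {w : V → ℝ | ∃ u ∈ e, ∃ v ∈ e, w = Pi.single u (1 : ℝ) - Pi.single v 1}) ∧
    (∀ u ∈ e, ∀ v ∈ e, u ≠ v →
      (Pi.single u (1 : ℝ) - Pi.single v 1) ∈ Set.extremePoints ℝ B) := by
  intro B
  have hene : e.Nonempty := Finset.card_pos.1 (by omega)
  have hF0 : ∀ S, 0 ≤ F S := by intro S; rw [hF]; split <;> norm_num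
  have hF1 : ∀ S, F S ≤ 1 := by intro S; rw [hF]; split <;> norm_num
  have hFuniv : F Finset.univ = 0 := by
    rw [hF]
    simp [Finset.univ_inter]
  -- each single u - single v is in B
  have hDB : ∀ u ∈ e, ∀ v ∈ e, (Pi.single u (1:ℝ) - Pi.single v 1) ∈ B := by
    intro u hu v hv
    constructor
    · intro S
      have hsum : ∑ x ∈ S, ((Pi.single u (1:ℝ) - Pi.single v 1) : V → ℝ) x
          = (if u ∈ S then (1:ℝ) else 0) - (if v ∈ S then 1 else 0) := by
        simp only [Pi.sub_apply, Finset.sum_sub_distrib, single_sum]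
      rw [hsum]
      by_cases huS : u ∈ S
      · by_cases hvS : v ∈ S
        · simp [huS, hvS]; exact hF0 S
        · rw [if_pos huS, if_neg hvS, hF S, if_pos]
          · norm_num
          · refine ⟨⟨u, Finset.mem_inter.2 ⟨huS, hu⟩⟩, fun h => hvS ?_⟩
            have hv' : v ∈ S ∩ e := by rw [h]; exact hv
            exact (Finset.mem_inter.1 hv').1
      · have : (if u ∈ S then (1:ℝ) else 0) - (if v ∈ S then 1 else 0) ≤ 0 := by
          rw [if_neg huS]; split <;> norm_num
        exact this.trans (hF0 S)
    · rw [hFuniv]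
      simp only [Pi.sub_apply, Finset.sum_sub_distrib, single_sum,
        Finset.mem_univ, if_pos]
      ring
  -- members of B vanish off e
  have hvanish : ∀ w ∈ B, ∀ x, x ∉ e → w x = 0 := by
    intro w hw x hx
    have h1 : w x ≤ F {x} := by
      have := hw.1 {x}
      simpa using this
    have hFx : F {x} = 0 := by
      rw [hF, if_neg]
      rintro ⟨⟨y, hy⟩, -⟩
      rw [Finset.mem_inter, Finset.mem_singleton] at hy
      exact hx (hy.1 ▸ hy.2)
    have h2 : ∑ y ∈ Finset.univ.erase x, w y ≤ F (Finset.univ.erase x) := hw.1 _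
    have hFe : F (Finset.univ.erase x) = 0 := by
      rw [hF, if_neg]
      rintro ⟨-, hne⟩
      apply hne
      apply Finset.inter_eq_right.2
      intro y hy
      exact Finset.mem_erase.2 ⟨fun h => hx (h ▸ hy), Finset.mem_univ y⟩
    rw [Finset.sum_erase_eq_sub (Finset.mem_univ x), hw.2, hFuniv] at h2
    rw [hFx] at h1
    rw [hFe] at h2
    linarith
  -- B equals the convex hull of cutD e
  have hBsub : B ⊆ convexHull ℝ (cutD e) := by
    intro w hw
    apply decomp_aux e hene (Finset.univ.filter (fun x => w x ≠ 0)).card w le_rfl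
      (hvanish w hw) (by rw [hw.2, hFuniv])
    have hmax : ∀ x ∈ e, max (w x) 0 = if 0 < w x then w x else 0 := by
      intro x _
      rcases le_or_gt (w x) 0 with h | h
      · rw [max_eq_right h, if_neg (by linarith)]
      · rw [max_eq_left h.le, if_pos h]
    rw [Finset.sum_congr rfl hmax, ← Finset.sum_filter]
    exact (hw.1 _).trans (hF1 _)
  have hconvB : Convex ℝ B := by
    intro a ha b hb s t hs ht hst
    constructor
    · intro S
      have : ∑ x ∈ S, (s • a + t • b) x = s * ∑ x ∈ S, a x + t * ∑ x ∈ S, b x := by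
        simp [Finset.sum_add_distrib, Finset.mul_sum]
      rw [this]
      calc s * ∑ x ∈ S, a x + t * ∑ x ∈ S, b x
          ≤ s * F S + t * F S := by
            have := mul_le_mul_of_nonneg_left (ha.1 S) hs
            have := mul_le_mul_of_nonneg_left (hb.1 S) ht
            linarith
        _ = F S := by rw [← add_mul, hst, one_mul]
    · have : ∑ x, (s • a + t • b) x = s * ∑ x, a x + t * ∑ x, b x := by
        simp [Finset.sum_add_distrib, Finset.mul_sum]
      rw [this, ha.2, hb.2, ← add_mul, hst, one_mul]
  have hBeq : B = convexHull ℝ (cutD e) := by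
    apply Set.Subset.antisymm hBsub
    apply convexHull_min _ hconvB
    rintro w ⟨u, hu, v, hv, rfl⟩
    exact hDB u hu v hv
  constructor
  · intro w hw
    rw [hBeq] at hw
    exact extremePoints_convexHull_subset hw
  · -- extreme point direction
    intro u hu v hv huv
    set w : V → ℝ := Pi.single u (1:ℝ) - Pi.single v 1 with hw_def
    have hwB : w ∈ B := hDB u hu v hv
    have hwu : w u = 1 := by simp [hw_def, Pi.single_apply, huv]
    have hwv : w v = -1 := by simp [hw_def, Pi.single_apply, Ne.symm huv]
    have hwx : ∀ x, x ≠ u → x ≠ v → w x = 0 := by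
      intro x h1 h2; simp [hw_def, Pi.single_apply, h1, h2]
    -- key F values
    have hFu : F {u} = 1 := by
      rw [hF, if_pos]
      refine ⟨⟨u, Finset.mem_inter.2 ⟨Finset.mem_singleton_self u, hu⟩⟩, fun h => ?_⟩
      have hv' : v ∈ ({u} : Finset V) ∩ e := by rw [h]; exact hv
      exact huv (Finset.mem_singleton.1 (Finset.mem_inter.1 hv').1).symm
    have hFev : F (Finset.univ.erase v) = 1 := by
      rw [hF, if_pos]
      refine ⟨⟨u, Finset.mem_inter.2 ⟨Finset.mem_erase.2 ⟨huv, Finset.mem_univ u⟩, hu⟩⟩,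
        fun h => ?_⟩
      have hv' : v ∈ (Finset.univ.erase v) ∩ e := by rw [h]; exact hv
      exact (Finset.mem_erase.1 (Finset.mem_inter.1 hv').1).1 rfl
    -- characterization: any c ∈ B with tight constraints equals w
    have key : ∀ c : V → ℝ, c ∈ B → c u = 1 →
        (∑ y ∈ Finset.univ.erase v, c y = 1) → c = w := by
      intro c hc hcu hcev
      have hcsum : ∑ x, c x = 0 := by rw [hc.2, hFuniv]
      have hcv : c v = -1 := by
        rw [Finset.sum_erase_eq_sub (Finset.mem_univ v), hcsum] at hcev
        linarith
      funext x
      by_cases hxu : x = u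
      · rw [hxu, hcu, hwu]
      by_cases hxv : x = v
      · rw [hxv, hcv, hwv]
      -- show c x = 0
      have hx1 : c x ≤ 0 := by
        have hFux : F {u, x} = 1 := by
          rw [hF, if_pos]
          refine ⟨⟨u, Finset.mem_inter.2 ⟨Finset.mem_insert_self u _, hu⟩⟩, fun h => ?_⟩
          have hv' : v ∈ ({u, x} : Finset V) ∩ e := by rw [h]; exact hv
          have := (Finset.mem_inter.1 hv').1
          rcases Finset.mem_insert.1 this with h' | h'
          · exact huv h'.symm
          · exact hxv ((Finset.mem_singleton.1 h').symm)
        have := hc.1 {u, x}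
        rw [hFux, Finset.sum_pair (fun h => hxu h.symm), hcu] at this
        linarith
      have hx2 : 0 ≤ c x := by
        have hFS : F ((Finset.univ.erase v).erase x) = 1 := by
          rw [hF, if_pos]
          constructor
          · refine ⟨u, Finset.mem_inter.2 ⟨?_, hu⟩⟩
            exact Finset.mem_erase.2 ⟨fun h => hxu h.symm,
              Finset.mem_erase.2 ⟨huv, Finset.mem_univ u⟩⟩
          · intro h
            have hv' : v ∈ ((Finset.univ.erase v).erase x) ∩ e := by rw [h]; exact hv
            have := (Finset.mem_erase.1 (Finset.mem_inter.1 hv').1).2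
            exact (Finset.mem_erase.1 this).1 rfl
        have hxev : x ∈ Finset.univ.erase v :=
          Finset.mem_erase.2 ⟨hxv, Finset.mem_univ x⟩
        have := hc.1 ((Finset.univ.erase v).erase x)
        rw [hFS, Finset.sum_erase_eq_sub hxev, hcev] at this
        linarith
      rw [hwx x hxu hxv]
      linarith
    refine ⟨hwB, fun a ha b hb hseg => ?_⟩
    obtain ⟨s, t, hs, ht, hst, hcomb⟩ := hseg
    have tight : ∀ S : Finset V, ∑ x ∈ S, w x = F S →
        ∑ x ∈ S, a x = F S ∧ ∑ x ∈ S, b x = F S := by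
      intro S hSw
      have hsum_comb : s * (∑ x ∈ S, a x) + t * (∑ x ∈ S, b x) = F S := by
        rw [← hSw, Finset.mul_sum, Finset.mul_sum, ← Finset.sum_add_distrib]
        refine Finset.sum_congr rfl (fun x _ => ?_)
        have := congrFun hcomb x
        simpa using this
      have h1 : ∑ x ∈ S, a x ≤ F S := ha.1 S
      have h2 : ∑ x ∈ S, b x ≤ F S := hb.1 S
      have hexp : s * F S + t * F S = F S := by rw [← add_mul, hst, one_mul]
      constructor
      · by_contra h
        have hlt : ∑ x ∈ S, a x < F S := lt_of_le_of_ne h1 h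
        have := mul_lt_mul_of_pos_left hlt hs
        have h2' := mul_le_mul_of_nonneg_left h2 ht.le
        linarith
      · by_contra h
        have hlt : ∑ x ∈ S, b x < F S := lt_of_le_of_ne h2 h
        have := mul_lt_mul_of_pos_left hlt ht
        have h1' := mul_le_mul_of_nonneg_left h1 hs.le
        linarith
    have hwU : ∑ x ∈ ({u} : Finset V), w x = F {u} := by
      rw [Finset.sum_singleton, hwu, hFu]
    have hwEV : ∑ x ∈ Finset.univ.erase v, w x = F (Finset.univ.erase v) := by
      rw [Finset.sum_erase_eq_sub (Finset.mem_univ v), hwB.2, hFuniv, hwv, hFev]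
      ring
    obtain ⟨haU, hbU⟩ := tight {u} hwU
    obtain ⟨haEV, hbEV⟩ := tight (Finset.univ.erase v) hwEV
    rw [Finset.sum_singleton, hFu] at haU hbU
    rw [hFev] at haEV hbEV
    exact key a ha haU haEV
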